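/- Let n, k, m ≥ 0 with n ≥ 1. Let Σ be a positive-semidefinite 2^k × 2^k complex matrix, and let M be a complex matrix whose rows are indexed by {1,…,2^k} × {1,…,2^m} and whose columns are indexed by {1,…,2^k} × {1,…,2ⁿ} (i.e., M : ℂ^{2^k} ⊗ ℂ^{2ⁿ} → ℂ^{2^k} ⊗ ℂ^{2^m}). For a matrix B indexed by {1,…,2^k} × {1,…,2^m} on both sides, define the partial trace Tr_{>k}(B) as the 2^k × 2^k matrix with entries Tr_{>k}(B)(i,i') = ∑_{m̄} B((i,m̄),(i',m̄)). Then (1/(4ⁿ − 1)) · ∑_{s ≠ 0} ‖Tr_{>k}(M (Σ ⊗ (P_s/2ⁿ)) Mᴴ)‖_tr² ≤ (2^{k−n}/(4ⁿ − 1)) · [Tr(Mᴴ M (Σ ⊗ I_{2ⁿ}))]², where the sum ranges over all n-qubit Pauli strings P_s with s not identically 0, and Σ ⊗ A denotes the Kronecker product compatible with the chosen index pairing. -/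

import Mathlib

open Matrix Finset ComplexConjugate
open scoped Kronecker ComplexOrder

/-- The four single-qubit Pauli matrices `I, X, Y, Z`. -/
noncomputable def pauli : Fin 4 → Matrix (Fin 2) (Fin 2) ℂ :=
  ![1, !![0, 1; 1, 0], !![0, -Complex.I; Complex.I, 0], !![1, 0; 0, -1]]

/-- The `n`-qubit Pauli string `σ_{s 1} ⊗ ⋯ ⊗ σ_{s n}`, as a matrix indexed by
functions `Fin n → Fin 2`. -/
noncomputable def pauliString (n : ℕ) (s : Fin n → Fin 4) :
    Matrix (Fin n → Fin 2) (Fin n → Fin 2) ℂ :=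
  Matrix.of fun i j => ∏ t, pauli (s t) (i t) (j t)

/-- The partial trace over the second tensor factor:
`ptr B (i, i') = ∑ b, B (i, b) (i', b)`. -/
noncomputable def ptr {α β : Type*} [Fintype β] (B : Matrix (α × β) (α × β) ℂ) :
    Matrix α α ℂ :=
  Matrix.of fun i i' => ∑ b, B (i, b) (i', b)

/-- The trace norm `‖A‖_tr`: the trace of the positive-semidefinite square root of
`Aᴴ A` (the sum of singular values of `A`). -/
noncomputable def traceNorm {ι : Type*} [Fintype ι] [DecidableEq ι] (A : Matrix ι ι ℂ) : ℝ :=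
  (((Matrix.posSemidef_conjTranspose_mul_self A).1.eigenvectorUnitary : Matrix ι ι ℂ) *
      Matrix.diagonal ((fun x : ℝ => (x : ℂ)) ∘ Real.sqrt ∘ (Matrix.posSemidef_conjTranspose_mul_self A).1.eigenvalues) *
      (star (Matrix.posSemidef_conjTranspose_mul_self A).1.eigenvectorUnitary : Matrix ι ι ℂ)).trace.re

lemma psd_sqrt_spec {ι : Type*} [Fintype ι] [DecidableEq ι] {X : Matrix ι ι ℂ}
    (hX : X.PosSemidef) :
    ((hX.1.eigenvectorUnitary : Matrix ι ι ℂ) *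
      Matrix.diagonal ((fun x : ℝ => (x : ℂ)) ∘ Real.sqrt ∘ hX.1.eigenvalues) *
      (star hX.1.eigenvectorUnitary : Matrix ι ι ℂ)).IsHermitian ∧
    ((hX.1.eigenvectorUnitary : Matrix ι ι ℂ) *
      Matrix.diagonal ((fun x : ℝ => (x : ℂ)) ∘ Real.sqrt ∘ hX.1.eigenvalues) *
      (star hX.1.eigenvectorUnitary : Matrix ι ι ℂ)) *
    ((hX.1.eigenvectorUnitary : Matrix ι ι ℂ) *
      Matrix.diagonal ((fun x : ℝ => (x : ℂ)) ∘ Real.sqrt ∘ hX.1.eigenvalues) *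
      (star hX.1.eigenvectorUnitary : Matrix ι ι ℂ)) = X := by
  have hU : (star hX.1.eigenvectorUnitary : Matrix ι ι ℂ) * (hX.1.eigenvectorUnitary : Matrix ι ι ℂ) = 1 :=
    Unitary.star_mul_self_of_mem hX.1.eigenvectorUnitary.prop
  have hD : (Matrix.diagonal ((fun x : ℝ => (x : ℂ)) ∘ Real.sqrt ∘ hX.1.eigenvalues))ᴴ =
      Matrix.diagonal ((fun x : ℝ => (x : ℂ)) ∘ Real.sqrt ∘ hX.1.eigenvalues) := by
    rw [Matrix.diagonal_conjTranspose]
    congr 1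
    funext i
    simp
  refine ⟨?_, ?_⟩
  · unfold Matrix.IsHermitian
    rw [Matrix.conjTranspose_mul, Matrix.conjTranspose_mul, hD]
    simp only [Matrix.star_eq_conjTranspose, Matrix.conjTranspose_conjTranspose, Unitary.coe_star]
    rw [Matrix.mul_assoc]
  · have hDD : Matrix.diagonal ((fun x : ℝ => (x : ℂ)) ∘ Real.sqrt ∘ hX.1.eigenvalues) *
        Matrix.diagonal ((fun x : ℝ => (x : ℂ)) ∘ Real.sqrt ∘ hX.1.eigenvalues) =
        Matrix.diagonal (RCLike.ofReal ∘ hX.1.eigenvalues) := by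
      rw [Matrix.diagonal_mul_diagonal]
      congr 1
      funext i
      simp only [Function.comp_apply]
      rw [← Complex.ofReal_mul, Real.mul_self_sqrt (hX.eigenvalues_nonneg i)]
      rfl
    conv_rhs => rw [hX.1.spectral_theorem, Unitary.conjStarAlgAut_apply]
    rw [← hDD]
    simp only [Matrix.mul_assoc]
    rw [← Matrix.mul_assoc (star (hX.1.eigenvectorUnitary : Matrix ι ι ℂ)), hU, Matrix.one_mul]

lemma frob_trace {ι : Type*} [Fintype ι] [DecidableEq ι] (B : Matrix ι ι ℂ) :
    (Bᴴ * B).trace = ((∑ i, ∑ j, Complex.normSq (B i j) : ℝ) : ℂ) := by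
  simp only [Matrix.trace, Matrix.diag, Matrix.mul_apply, Matrix.conjTranspose_apply,
    Complex.star_def, ← Complex.normSq_eq_conj_mul_self]
  push_cast
  rw [Finset.sum_comm]

/-- Trace norm squared is at most dimension times the squared Frobenius norm. -/
lemma traceNorm_sq_le {ι : Type*} [Fintype ι] [DecidableEq ι] (A : Matrix ι ι ℂ) :
    traceNorm A ^ 2 ≤ (Fintype.card ι : ℝ) * ∑ i, ∑ j, Complex.normSq (A i j) := by
  set h := Matrix.posSemidef_conjTranspose_mul_self A with hdef
  set S := (h.1.eigenvectorUnitary : Matrix ι ι ℂ) *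
      Matrix.diagonal ((fun x : ℝ => (x : ℂ)) ∘ Real.sqrt ∘ h.1.eigenvalues) *
      (star h.1.eigenvectorUnitary : Matrix ι ι ℂ) with hSdef
  have hH : S.IsHermitian := (psd_sqrt_spec h).1
  have hm : S * S = Aᴴ * A := (psd_sqrt_spec h).2
  have h1 : traceNorm A = ∑ i, (S i i).re := by
    simp [traceNorm, Matrix.trace, Matrix.diag, Complex.re_sum, ← hSdef]
  have hfrob : ∑ i, ∑ j, Complex.normSq (S i j) = ∑ i, ∑ j, Complex.normSq (A i j) := by
    have h2 : (Sᴴ * S).trace = (Aᴴ * A).trace := by rw [hH.eq, hm]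
    rw [frob_trace, frob_trace] at h2
    exact_mod_cast h2
  calc traceNorm A ^ 2 = (∑ i, (S i i).re) ^ 2 := by rw [h1]
    _ ≤ #(univ : Finset ι) * ∑ i, (S i i).re ^ 2 := sq_sum_le_card_mul_sum_sq
    _ ≤ (Fintype.card ι : ℝ) * ∑ i, ∑ j, Complex.normSq (S i j) := by
        rw [Finset.card_univ]
        refine mul_le_mul_of_nonneg_left (Finset.sum_le_sum fun i _ => ?_) (by positivity)
        calc (S i i).re ^ 2 ≤ Complex.normSq (S i i) := by
              simp only [Complex.normSq_apply, sq]; nlinarith [sq_nonneg (S i i).im]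
          _ ≤ ∑ j, Complex.normSq (S i j) :=
              Finset.single_le_sum (fun j _ => Complex.normSq_nonneg _) (mem_univ i)
    _ = (Fintype.card ι : ℝ) * ∑ i, ∑ j, Complex.normSq (A i j) := by rw [hfrob]

/-- Orthogonality of the single-qubit Pauli matrices. -/
lemma pauli_parseval (a b c d : Fin 2) :
    ∑ u : Fin 4, pauli u a b * conj (pauli u c d) = if a = c ∧ b = d then 2 else 0 := by
  fin_cases a <;> fin_cases b <;> fin_cases c <;> fin_cases d <;>
    simp [pauli, Fin.sum_univ_four, Matrix.one_apply, Complex.ext_iff] <;> norm_num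

/-- Orthogonality of the `n`-qubit Pauli strings. -/
lemma pauliString_parseval (n : ℕ) (a b c d : Fin n → Fin 2) :
    ∑ s : Fin n → Fin 4, pauliString n s a b * conj (pauliString n s c d) =
      if a = c ∧ b = d then (2 : ℂ) ^ n else 0 := by
  have key : ∀ s : Fin n → Fin 4, pauliString n s a b * conj (pauliString n s c d) =
      ∏ t, (pauli (s t) (a t) (b t) * conj (pauli (s t) (c t) (d t))) := by
    intro s
    simp [pauliString, map_prod, Finset.prod_mul_distrib]
  simp_rw [key]
  rw [← Fintype.prod_sum (fun t (u : Fin 4) => pauli u (a t) (b t) * conj (pauli u (c t) (d t)))]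
  simp_rw [pauli_parseval]
  by_cases h : a = c ∧ b = d
  · obtain ⟨h1, h2⟩ := h
    subst h1; subst h2
    simp
  · rw [if_neg h]
    have : ∃ t, ¬(a t = c t ∧ b t = d t) := by
      by_contra hc
      push_neg at hc
      exact h ⟨funext fun t => (hc t).1, funext fun t => (hc t).2⟩
    obtain ⟨t, ht⟩ := this
    exact Finset.prod_eq_zero (mem_univ t) (by rw [if_neg ht])

/-- Cauchy–Schwarz for the standard Hermitian inner product on `κ → ℂ`. -/
lemma complex_cs {κ : Type*} [Fintype κ] (u v : κ → ℂ) :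
    Complex.normSq (∑ x, conj (u x) * v x) ≤
      (∑ x, Complex.normSq (u x)) * (∑ x, Complex.normSq (v x)) := by
  have h1 : ‖∑ x, conj (u x) * v x‖ ≤ ∑ x, ‖u x‖ * ‖v x‖ := by
    refine (norm_sum_le _ _).trans (le_of_eq ?_)
    simp [norm_mul]
  have h2 : (∑ x, ‖u x‖ * ‖v x‖) ^ 2 ≤
      (∑ x, ‖u x‖ ^ 2) * (∑ x, ‖v x‖ ^ 2) :=
    Finset.sum_mul_sq_le_sq_mul_sq _ _ _
  calc Complex.normSq (∑ x, conj (u x) * v x)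
      = ‖∑ x, conj (u x) * v x‖ ^ 2 := (Complex.sq_norm _).symm
    _ ≤ (∑ x, ‖u x‖ * ‖v x‖) ^ 2 := by
        have := norm_nonneg (∑ x, conj (u x) * v x)
        nlinarith
    _ ≤ (∑ x, ‖u x‖ ^ 2) * (∑ x, ‖v x‖ ^ 2) := h2
    _ = _ := by simp [Complex.sq_norm]

/-- Parseval-type identity: the Pauli coefficients of a matrix capture its Frobenius norm. -/
lemma par_apply (n : ℕ) (E : ((Fin n → Fin 2) × (Fin n → Fin 2)) → ℂ) :
    ∑ s : Fin n → Fin 4, Complex.normSq (∑ p, E p * pauliString n s p.1 p.2)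
      = 2 ^ n * ∑ p, Complex.normSq (E p) := by
  have key : ∑ s : Fin n → Fin 4, (∑ p, E p * pauliString n s p.1 p.2) *
      conj (∑ p, E p * pauliString n s p.1 p.2)
      = (2 : ℂ) ^ n * ∑ p, E p * conj (E p) := by
    have expand : ∀ s : Fin n → Fin 4, (∑ p, E p * pauliString n s p.1 p.2) *
        conj (∑ p, E p * pauliString n s p.1 p.2)
        = ∑ p, ∑ q, (E p * conj (E q)) *
            (pauliString n s p.1 p.2 * conj (pauliString n s q.1 q.2)) := by
      intro s
      rw [map_sum, Finset.sum_mul_sum]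
      exact Finset.sum_congr rfl fun p _ => Finset.sum_congr rfl fun q _ => by
        rw [_root_.map_mul]; ring
    simp_rw [expand]
    rw [Finset.sum_comm]
    have inner : ∀ p : (Fin n → Fin 2) × (Fin n → Fin 2),
        ∑ s : Fin n → Fin 4, ∑ q, (E p * conj (E q)) *
          (pauliString n s p.1 p.2 * conj (pauliString n s q.1 q.2))
        = (E p * conj (E p)) * (2 : ℂ) ^ n := by
      intro p
      rw [Finset.sum_comm]
      have : ∀ q, ∑ s : Fin n → Fin 4, (E p * conj (E q)) *
          (pauliString n s p.1 p.2 * conj (pauliString n s q.1 q.2))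
          = (E p * conj (E q)) * (if p = q then (2:ℂ)^n else 0) := by
        intro q
        rw [← Finset.mul_sum, pauliString_parseval]
        congr 1
        simp [Prod.ext_iff]
      simp_rw [this]
      simp [mul_ite, Finset.sum_ite_eq]
    simp_rw [inner]
    rw [Finset.mul_sum]
    exact Finset.sum_congr rfl fun p _ => by ring
  have cast1 : ((∑ s : Fin n → Fin 4,
      Complex.normSq (∑ p, E p * pauliString n s p.1 p.2) : ℝ) : ℂ)
      = ((2 ^ n * ∑ p, Complex.normSq (E p) : ℝ) : ℂ) := by
    push_cast
    simp_rw [← Complex.mul_conj]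
    rw [key]
  exact_mod_cast cast1

/-- Average discrepancy bound for an edge of a learning tree with
`k` qubits of quantum memory (Lemma 6.2): averaging over non-identity `n`-qubit
Pauli strings,
`(1/(4ⁿ−1)) ∑_{s ≠ 0} ‖Tr_{>k}(M (Σ ⊗ P_s/2ⁿ) Mᴴ)‖_tr²
    ≤ (2^{k−n}/(4ⁿ−1)) · [Tr(Mᴴ M (Σ ⊗ I))]²`. -/
theorem bounded_memory_average_discrepancy_bound
    (n k m : ℕ) (hn : 1 ≤ n)
    (Sig : Matrix (Fin (2 ^ k)) (Fin (2 ^ k)) ℂ) (hSig : Sig.PosSemidef)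
    (M : Matrix (Fin (2 ^ k) × Fin (2 ^ m)) (Fin (2 ^ k) × (Fin n → Fin 2)) ℂ) :
    (1 / (4 ^ n - 1) : ℝ) *
        ∑ s ∈ Finset.univ.filter (fun s : Fin n → Fin 4 => s ≠ 0),
          (traceNorm (ptr (M * (Sig ⊗ₖ (((2 : ℂ) ^ n)⁻¹ • pauliString n s)) * Mᴴ))) ^ 2
      ≤ ((2 : ℝ) ^ k / (2 : ℝ) ^ n / ((4 : ℝ) ^ n - 1)) *
          ((Mᴴ * M *
            (Sig ⊗ₖ (1 : Matrix (Fin n → Fin 2) (Fin n → Fin 2) ℂ))).trace.re) ^ 2 := by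
  classical
  set c : ℂ := ((2 : ℂ) ^ n)⁻¹ with hcdef
  set R := (hSig.1.eigenvectorUnitary : Matrix (Fin (2 ^ k)) (Fin (2 ^ k)) ℂ) *
      Matrix.diagonal ((fun x : ℝ => (x : ℂ)) ∘ Real.sqrt ∘ hSig.1.eigenvalues) *
      (star hSig.1.eigenvectorUnitary : Matrix (Fin (2 ^ k)) (Fin (2 ^ k)) ℂ) with hRdef
  have hRH : R.IsHermitian := (psd_sqrt_spec hSig).1
  have hR2 : R * R = Sig := (psd_sqrt_spec hSig).2
  have hRconj : ∀ j p, conj (R j p) = R p j := by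
    intro j p
    conv_rhs => rw [← hRH.eq]
    rfl
  have hRR : ∀ j j', ∑ p, R j p * conj (R j' p) = Sig j j' := by
    intro j j'
    simp_rw [hRconj]
    rw [← hR2, Matrix.mul_apply]
  set w : Fin (2 ^ k) → (Fin n → Fin 2) → (Fin (2 ^ m) × Fin (2 ^ k)) → ℂ :=
    fun i a bp => ∑ j, M (i, bp.1) (j, a) * R j bp.2 with hwdef
  set e : Fin (2 ^ k) → Fin (2 ^ k) → (Fin n → Fin 2) → (Fin n → Fin 2) → ℂ :=
    fun i i' a a' => ∑ bp, conj (w i' a' bp) * w i a bp with hedef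
  set N : Fin (2 ^ k) → (Fin n → Fin 2) → ℝ :=
    fun i a => ∑ bp, Complex.normSq (w i a bp) with hNdef
  -- Gram representation of e
  have he : ∀ i i' a a', e i i' a a' =
      ∑ b, ∑ j, ∑ j', M (i, b) (j, a) * Sig j j' * conj (M (i', b) (j', a')) := by
    intro i i' a a'
    simp only [hedef, hwdef]
    rw [Fintype.sum_prod_type]
    refine Finset.sum_congr rfl fun b _ => ?_
    have L : ∀ p, conj (∑ j, M (i', b) (j, a') * R j p) * (∑ j, M (i, b) (j, a) * R j p)
        = ∑ j, ∑ j', M (i, b) (j, a) * (R j p * conj (R j' p)) * conj (M (i', b) (j', a')) := by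
      intro p
      rw [map_sum, Finset.sum_mul_sum, Finset.sum_comm]
      refine Finset.sum_congr rfl fun j _ => Finset.sum_congr rfl fun j' _ => ?_
      rw [_root_.map_mul]
      ring
    simp_rw [L]
    rw [Finset.sum_comm]
    refine Finset.sum_congr rfl fun j _ => ?_
    rw [Finset.sum_comm]
    refine Finset.sum_congr rfl fun j' _ => ?_
    rw [← hRR j j']
    rw [Finset.mul_sum, Finset.sum_mul]
  -- entry formula for the partial trace matrix
  have hA : ∀ (s : Fin n → Fin 4) i i',
      ptr (M * (Sig ⊗ₖ (c • pauliString n s)) * Mᴴ) i i' =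
        c * ∑ p : (Fin n → Fin 2) × (Fin n → Fin 2),
          e i i' p.1 p.2 * pauliString n s p.1 p.2 := by
    intro s i i'
    simp_rw [he]
    simp only [ptr, Matrix.of_apply, Matrix.mul_apply, Matrix.conjTranspose_apply,
      Complex.star_def, Matrix.kroneckerMap_apply, Matrix.smul_apply, smul_eq_mul,
      Finset.sum_mul, Finset.mul_sum, Fintype.sum_prod_type]
    conv_lhs => enter [2,b,2,j',2,a']; rw [Finset.sum_comm]
    conv_lhs => enter [2,b,2,j']; rw [Finset.sum_comm]
    conv_lhs => enter [2,b]; rw [Finset.sum_comm]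
    conv_lhs => enter [2,b,2,a]; rw [Finset.sum_comm]
    conv_lhs => rw [Finset.sum_comm]
    conv_lhs => enter [2,a]; rw [Finset.sum_comm]
    conv_lhs => enter [2,a,2,a',2,b]; rw [Finset.sum_comm]
    refine Finset.sum_congr rfl fun a _ => Finset.sum_congr rfl fun a' _ =>
      Finset.sum_congr rfl fun b _ => Finset.sum_congr rfl fun j _ =>
      Finset.sum_congr rfl fun j' _ => by ring
  -- average of squared Frobenius norms via Parseval
  have hFsum : ∑ s : Fin n → Fin 4, ∑ i, ∑ i',
      Complex.normSq (ptr (M * (Sig ⊗ₖ (c • pauliString n s)) * Mᴴ) i i')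
      = Complex.normSq c * 2 ^ n * ∑ i, ∑ i',
          ∑ p : (Fin n → Fin 2) × (Fin n → Fin 2), Complex.normSq (e i i' p.1 p.2) := by
    rw [Finset.sum_comm]
    rw [Finset.mul_sum]
    refine Finset.sum_congr rfl fun i _ => ?_
    rw [Finset.sum_comm, Finset.mul_sum]
    refine Finset.sum_congr rfl fun i' _ => ?_
    simp_rw [hA, Complex.normSq_mul]
    rw [← Finset.mul_sum, par_apply n (fun p => e i i' p.1 p.2)]
    ring
  -- Cauchy–Schwarz / Gram bound
  have hcs : ∀ i i' a a', Complex.normSq (e i i' a a') ≤ N i' a' * N i a := by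
    intro i i' a a'
    simpa only [hedef, hNdef] using complex_cs (w i' a') (w i a)
  have hGram : ∑ i, ∑ i', ∑ p : (Fin n → Fin 2) × (Fin n → Fin 2),
      Complex.normSq (e i i' p.1 p.2) ≤ (∑ i, ∑ a, N i a) ^ 2 := by
    have step1 : ∑ i, ∑ i', ∑ p : (Fin n → Fin 2) × (Fin n → Fin 2),
        Complex.normSq (e i i' p.1 p.2)
        ≤ ∑ i, ∑ i', ∑ p : (Fin n → Fin 2) × (Fin n → Fin 2), N i' p.2 * N i p.1 :=
      Finset.sum_le_sum fun i _ => Finset.sum_le_sum fun i' _ =>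
        Finset.sum_le_sum fun p _ => hcs i i' p.1 p.2
    refine step1.trans (le_of_eq ?_)
    rw [sq, Finset.sum_mul_sum]
    refine Finset.sum_congr rfl fun i _ => Finset.sum_congr rfl fun i' _ => ?_
    rw [Fintype.sum_prod_type, Finset.sum_mul_sum]
    exact Finset.sum_congr rfl fun a _ => Finset.sum_congr rfl fun a' _ => by ring
  -- trace identity
  have hdiag : ∀ i a, e i i a a = ((N i a : ℝ) : ℂ) := by
    intro i a
    simp only [hedef, hNdef]
    push_cast
    simp_rw [Complex.normSq_eq_conj_mul_self]
  have hTr : (Mᴴ * M * (Sig ⊗ₖ (1 : Matrix (Fin n → Fin 2) (Fin n → Fin 2) ℂ))).trace =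
      ((∑ i, ∑ a, N i a : ℝ) : ℂ) := by
    have h2 : (Mᴴ * M * (Sig ⊗ₖ (1 : Matrix (Fin n → Fin 2) (Fin n → Fin 2) ℂ))).trace =
        ∑ i, ∑ a, e i i a a := by
      simp_rw [he]
      simp only [Matrix.trace, Matrix.diag, Matrix.mul_apply, Matrix.conjTranspose_apply,
        Complex.star_def, Matrix.kroneckerMap_apply, Matrix.one_apply, Fintype.sum_prod_type,
        Finset.sum_mul, Finset.mul_sum, mul_ite, mul_one, mul_zero, ite_mul, zero_mul,
        Finset.sum_ite_eq', Finset.mem_univ, if_true]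
      conv_lhs => enter [2,x,2,y]; rw [Finset.sum_comm]
      conv_lhs => enter [2,x,2,y,2,z]; rw [Finset.sum_comm]
      conv_lhs => enter [2,x]; rw [Finset.sum_comm]
      conv_lhs => rw [Finset.sum_comm]
      conv_lhs => enter [2,x]; rw [Finset.sum_comm]
      conv_lhs => enter [2,x,2,y]; rw [Finset.sum_comm]
      conv_lhs => enter [2,x,2,y,2,z]; rw [Finset.sum_comm]
      refine Finset.sum_congr rfl fun i _ => Finset.sum_congr rfl fun a _ =>
        Finset.sum_congr rfl fun b _ => Finset.sum_congr rfl fun j _ =>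
        Finset.sum_congr rfl fun j' _ => by ring
    rw [h2]
    simp_rw [hdiag]
    push_cast
    rfl
  have hTre : (Mᴴ * M * (Sig ⊗ₖ (1 : Matrix (Fin n → Fin 2) (Fin n → Fin 2) ℂ))).trace.re =
      ∑ i, ∑ a, N i a := by rw [hTr, Complex.ofReal_re]
  -- assemble
  have hF : ∀ s : Fin n → Fin 4,
      traceNorm (ptr (M * (Sig ⊗ₖ (c • pauliString n s)) * Mᴴ)) ^ 2 ≤
        (2 : ℝ) ^ k * ∑ i, ∑ i',
          Complex.normSq (ptr (M * (Sig ⊗ₖ (c • pauliString n s)) * Mᴴ) i i') := by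
    intro s
    have h := traceNorm_sq_le (ptr (M * (Sig ⊗ₖ (c • pauliString n s)) * Mᴴ))
    simpa [Fintype.card_fin] using h
  have hnc : Complex.normSq c = ((4 : ℝ) ^ n)⁻¹ := by
    rw [hcdef]
    rw [map_inv₀ Complex.normSq, map_pow Complex.normSq]
    norm_num [Complex.normSq_apply]
  have h4 : (0 : ℝ) < 4 ^ n - 1 := by
    have h41 : (4 : ℝ) ^ 1 ≤ 4 ^ n := pow_le_pow_right₀ (by norm_num) hn
    norm_num at h41
    linarith
  have hmain : ∑ s ∈ Finset.univ.filter (fun s : Fin n → Fin 4 => s ≠ 0),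
      traceNorm (ptr (M * (Sig ⊗ₖ (c • pauliString n s)) * Mᴴ)) ^ 2 ≤
        (2 : ℝ) ^ k / (2 : ℝ) ^ n * (∑ i, ∑ a, N i a) ^ 2 := by
    calc ∑ s ∈ Finset.univ.filter (fun s : Fin n → Fin 4 => s ≠ 0),
        traceNorm (ptr (M * (Sig ⊗ₖ (c • pauliString n s)) * Mᴴ)) ^ 2
        ≤ ∑ s ∈ Finset.univ.filter (fun s : Fin n → Fin 4 => s ≠ 0),
            (2 : ℝ) ^ k * ∑ i, ∑ i',
              Complex.normSq (ptr (M * (Sig ⊗ₖ (c • pauliString n s)) * Mᴴ) i i') :=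
          Finset.sum_le_sum fun s _ => hF s
      _ ≤ ∑ s : Fin n → Fin 4, (2 : ℝ) ^ k * ∑ i, ∑ i',
            Complex.normSq (ptr (M * (Sig ⊗ₖ (c • pauliString n s)) * Mᴴ) i i') := by
          refine Finset.sum_le_sum_of_subset_of_nonneg (Finset.filter_subset _ _)
            fun s _ _ => ?_
          have : (0:ℝ) ≤ ∑ i, ∑ i',
              Complex.normSq (ptr (M * (Sig ⊗ₖ (c • pauliString n s)) * Mᴴ) i i') :=
            Finset.sum_nonneg fun i _ => Finset.sum_nonneg fun i' _ => Complex.normSq_nonneg _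
          positivity
      _ = (2 : ℝ) ^ k * ∑ s : Fin n → Fin 4, ∑ i, ∑ i',
            Complex.normSq (ptr (M * (Sig ⊗ₖ (c • pauliString n s)) * Mᴴ) i i') := by
          rw [← Finset.mul_sum]
      _ = (2 : ℝ) ^ k * (Complex.normSq c * 2 ^ n * ∑ i, ∑ i',
            ∑ p : (Fin n → Fin 2) × (Fin n → Fin 2), Complex.normSq (e i i' p.1 p.2)) := by
          rw [hFsum]
      _ ≤ (2 : ℝ) ^ k * (Complex.normSq c * 2 ^ n * (∑ i, ∑ a, N i a) ^ 2) := by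
          exact mul_le_mul_of_nonneg_left (mul_le_mul_of_nonneg_left hGram
            (mul_nonneg (Complex.normSq_nonneg _) (by positivity))) (by positivity)
      _ = (2 : ℝ) ^ k / (2 : ℝ) ^ n * (∑ i, ∑ a, N i a) ^ 2 := by
          rw [hnc]
          rw [show (4 : ℝ) = 2 * 2 by norm_num, mul_pow]
          have h2n : (2 : ℝ) ^ n ≠ 0 := by positivity
          field_simp
  rw [hTre]
  calc (1 / (4 ^ n - 1) : ℝ) *
      ∑ s ∈ Finset.univ.filter (fun s : Fin n → Fin 4 => s ≠ 0),
        traceNorm (ptr (M * (Sig ⊗ₖ (c • pauliString n s)) * Mᴴ)) ^ 2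
      ≤ (1 / (4 ^ n - 1) : ℝ) *
          ((2 : ℝ) ^ k / (2 : ℝ) ^ n * (∑ i, ∑ a, N i a) ^ 2) :=
        mul_le_mul_of_nonneg_left hmain (by positivity)
    _ = ((2 : ℝ) ^ k / (2 : ℝ) ^ n / ((4 : ℝ) ^ n - 1)) * (∑ i, ∑ a, N i a) ^ 2 := by
        ring
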